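/- The even linear map β̂: gDer(M(n|m))₀ → Der(M_{n̲}(ℂ)) defined by β̂(D)(β(M)) = β(DM) is a well-defined surjective Lie algebra homomorphism satisfying β̂(ad E) = ad β(E) for all E ∈ sl(n|m)₀. -/

import Mathlib

noncomputable section

/-- The `ℤ₂`-graded algebra `M(n|m)` of complex `(n+m)×(n+m)` matrices. -/
abbrev GMat (n m : ℕ) := Matrix (Fin (n + m)) (Fin (n + m)) ℂ

/-- The "body" matrix algebra `M_{max n m}(ℂ)`. -/
abbrev BMat (n m : ℕ) := Matrix (Fin (max n m)) (Fin (max n m)) ℂ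

namespace GMat

/-- Block degree of an index: `false` for the first (size `n`) block. -/
def bdeg (n m : ℕ) (i : Fin (n + m)) : Bool := decide (n ≤ i.val)

/-- `M` is homogeneous of degree `ε` (block-diagonal for `ε = false`,
block-off-diagonal for `ε = true`). -/
def IsHomog (n m : ℕ) (ε : Bool) (M : GMat n m) : Prop :=
  ∀ i j, Bool.xor (bdeg n m i) (bdeg n m j) ≠ ε → M i j = 0

/-- The Koszul sign `(-1)^{ab}`. -/
def sgn (a b : Bool) : ℂ := if a && b then -1 else 1

/-- Graded commutator of homogeneous elements of degrees `a`, `b`. -/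
def gcomm {n m : ℕ} (a b : Bool) (A B : GMat n m) : GMat n m := A * B - sgn a b • (B * A)

/-- Graded anticommutator of homogeneous elements of degrees `a`, `b`. -/
def gacomm {n m : ℕ} (a b : Bool) (A B : GMat n m) : GMat n m := A * B + sgn a b • (B * A)

/-- The grading matrix `Γ = diag(1_n, -1_m)`. -/
def Gamma (n m : ℕ) : GMat n m := Matrix.diagonal fun i => if bdeg n m i then -1 else 1

/-- `D` is a graded derivation of `M(n|m)` of degree `ε`. -/
def IsGDer (n m : ℕ) (ε : Bool) (D : GMat n m → GMat n m) : Prop :=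
  (∀ A B, D (A + B) = D A + D B) ∧
  (∀ (c : ℂ) A, D (c • A) = c • D A) ∧
  (∀ (a : Bool) M, IsHomog n m a M → IsHomog n m (Bool.xor a ε) (D M)) ∧
  (∀ (a : Bool) (M M' : GMat n m), IsHomog n m a M →
    D (M * M') = D M * M' + sgn ε a • (M * D M'))

/-- The graded adjoint action `ad E` of a homogeneous matrix `E` of degree `a`:
on homogeneous `M` it is the graded commutator `[E,M]_g`. -/
def gad (n m : ℕ) (a : Bool) (E : GMat n m) : GMat n m → GMat n m :=
  fun M => E * M - (if a then Gamma n m * M * Gamma n m * E else M * E)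

/-- The supertrace `str M = Tr M₁ - Tr M₄`. -/
def str (n m : ℕ) (M : GMat n m) : ℂ :=
  ∑ i, (if bdeg n m i then (-1 : ℂ) else 1) * M i i

end GMat



namespace GMat

/-- Embedding of the indices of the larger block into `Fin (n+m)`. -/
def emb (n m : ℕ) (i : Fin (max n m)) : Fin (n + m) :=
  if _h : m ≤ n then ⟨i.val, by have := i.isLt; omega⟩
  else ⟨n + i.val, by have := i.isLt; omega⟩

/-- The canonical body map `β : M(n|m) → M_{max n m}(ℂ)`, projection onto the
larger diagonal block. -/
def beta (n m : ℕ) (M : GMat n m) : BMat n m :=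
  Matrix.of fun i j => M (emb n m i) (emb n m j)

end GMat

namespace GMat

def inBig (n m : ℕ) (i : Fin (n + m)) : Prop := bdeg n m i ≠ decide (m ≤ n)

instance (n m : ℕ) : DecidablePred (inBig n m) := fun i => instDecidableNot

def ue (n m : ℕ) (j : Fin (n + m)) : Fin (max n m) :=
  ⟨(if m ≤ n then j.val else j.val - n) % max n m,
    Nat.mod_lt _ (by have := j.isLt; omega)⟩

lemma inBig_emb (n m : ℕ) (i : Fin (max n m)) : inBig n m (emb n m i) := by
  have hi := i.isLt
  unfold inBig bdeg emb
  split <;> simp only [ne_eq, decide_eq_decide] <;> rw [iff_iff_implies_and_implies] <;>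
    push_neg <;> omega

lemma ue_emb (n m : ℕ) (i : Fin (max n m)) : ue n m (emb n m i) = i := by
  have hi := i.isLt
  unfold ue emb
  split <;> rename_i h <;> apply Fin.ext
  · simp only [if_pos h]; rw [Nat.mod_eq_of_lt (by omega)]
  · simp only [if_neg h]; rw [Nat.mod_eq_of_lt (by omega)]; omega

lemma emb_ue (n m : ℕ) (j : Fin (n + m)) (hj : inBig n m j) : emb n m (ue n m j) = j := by
  have hj' := j.isLt
  unfold inBig bdeg at hj
  unfold emb ue
  simp only [ne_eq, decide_eq_decide, iff_iff_implies_and_implies] at hj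
  push_neg at hj
  split <;> rename_i h <;> apply Fin.ext
  · simp only [if_pos h]; rw [Nat.mod_eq_of_lt (by omega)]
  · simp only [if_neg h]; rw [Nat.mod_eq_of_lt (by omega)]; omega

lemma emb_inj (n m : ℕ) : Function.Injective (emb n m) := fun a b h => by
  rw [← ue_emb n m a, h, ue_emb]

lemma bdeg_emb_ne (n m : ℕ) (i : Fin (max n m)) (k : Fin (n+m)) (hk : ¬ inBig n m k) :
    bdeg n m (emb n m i) ≠ bdeg n m k := by
  have h1 := inBig_emb n m i
  unfold inBig at *
  simp only [not_not] at hk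
  rw [hk]; exact h1

lemma sum_emb (n m : ℕ) (f : Fin (n + m) → ℂ) (hf : ∀ k, ¬ inBig n m k → f k = 0) :
    ∑ k, f k = ∑ i, f (emb n m i) := by
  rw [← Finset.sum_image (g := emb n m) (f := f)
    (fun x _ y _ h => emb_inj n m h)]
  symm
  apply Finset.sum_subset (Finset.subset_univ _)
  intro j _ hj
  apply hf
  intro hb
  exact hj (Finset.mem_image.2 ⟨ue n m j, Finset.mem_univ _, emb_ue n m j hb⟩)

end GMat

namespace GMat

/-- extend a body matrix by zero -/
def extb (n m : ℕ) (X : BMat n m) : GMat n m :=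
  Matrix.of fun i j => if inBig n m i ∧ inBig n m j then X (ue n m i) (ue n m j) else 0

lemma extb_apply_big (n m : ℕ) (X : BMat n m) {i j : Fin (n+m)}
    (hi : inBig n m i) (hj : inBig n m j) :
    extb n m X i j = X (ue n m i) (ue n m j) := by
  have h : inBig n m i ∧ inBig n m j := ⟨hi, hj⟩
  simp only [extb, Matrix.of_apply, if_pos h]

lemma extb_apply_emb (n m : ℕ) (X : BMat n m) (i j : Fin (max n m)) :
    extb n m X (emb n m i) (emb n m j) = X i j := by
  rw [extb_apply_big n m X (inBig_emb n m i) (inBig_emb n m j), ue_emb, ue_emb]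

lemma extb_apply_nbig (n m : ℕ) (X : BMat n m) (i j : Fin (n+m))
    (h : ¬ (inBig n m i ∧ inBig n m j)) : extb n m X i j = 0 := by
  simp only [extb, Matrix.of_apply, if_neg h]

lemma beta_extb (n m : ℕ) (X : BMat n m) : beta n m (extb n m X) = X := by
  ext i j; exact extb_apply_emb n m X i j

lemma beta_add (n m : ℕ) (A B : GMat n m) :
    beta n m (A + B) = beta n m A + beta n m B := rfl

lemma beta_sub (n m : ℕ) (A B : GMat n m) :
    beta n m (A - B) = beta n m A - beta n m B := rfl

lemma beta_smul (n m : ℕ) (c : ℂ) (A : GMat n m) :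
    beta n m (c • A) = c • beta n m A := rfl

lemma extb_add (n m : ℕ) (X Y : BMat n m) :
    extb n m (X + Y) = extb n m X + extb n m Y := by
  ext i j
  simp only [extb, Matrix.of_apply, Matrix.add_apply]
  split <;> simp

lemma extb_smul (n m : ℕ) (c : ℂ) (X : BMat n m) :
    extb n m (c • X) = c • extb n m X := by
  ext i j
  simp only [extb, Matrix.of_apply, Matrix.smul_apply]
  split <;> simp

lemma bool_xor_ne_false (x y : Bool) : Bool.xor x y ≠ false ↔ x ≠ y := by
  cases x <;> cases y <;> decide

lemma inBig_iff_of_bdeg_eq (n m : ℕ) {i j : Fin (n+m)} (h : bdeg n m i = bdeg n m j) :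
    inBig n m i ↔ inBig n m j := by unfold inBig; rw [h]

lemma bdeg_eq_of_inBig (n m : ℕ) {i j : Fin (n+m)} (hi : inBig n m i) (hj : inBig n m j) :
    bdeg n m i = bdeg n m j := by
  unfold inBig at *
  revert hi hj
  cases bdeg n m i <;> cases bdeg n m j <;> cases (decide (m ≤ n)) <;> decide

lemma extb_homog (n m : ℕ) (X : BMat n m) : IsHomog n m false (extb n m X) := by
  intro i j hij
  rw [bool_xor_ne_false] at hij
  apply extb_apply_nbig
  intro ⟨h1, h2⟩
  exact hij (bdeg_eq_of_inBig n m h1 h2)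

lemma beta_mul_extb (n m : ℕ) (A : GMat n m) (X : BMat n m) :
    beta n m (A * extb n m X) = beta n m A * X := by
  ext i j
  show (A * extb n m X) (emb n m i) (emb n m j) = _
  rw [Matrix.mul_apply, Matrix.mul_apply,
    sum_emb n m _ (fun k hk => by rw [extb_apply_nbig n m X k _ (fun h => hk h.1), mul_zero])]
  exact Finset.sum_congr rfl fun k _ => by rw [extb_apply_emb]; rfl

lemma beta_extb_mul (n m : ℕ) (X : BMat n m) (A : GMat n m) :
    beta n m (extb n m X * A) = X * beta n m A := by
  ext i j
  show (extb n m X * A) (emb n m i) (emb n m j) = _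
  rw [Matrix.mul_apply, Matrix.mul_apply,
    sum_emb n m _ (fun k hk => by rw [extb_apply_nbig n m X _ k (fun h => hk h.2), zero_mul])]
  exact Finset.sum_congr rfl fun k _ => by rw [extb_apply_emb]; rfl

lemma extb_mul_extb (n m : ℕ) (X Y : BMat n m) :
    extb n m X * extb n m Y = extb n m (X * Y) := by
  ext i j
  rw [Matrix.mul_apply]
  by_cases h : inBig n m i ∧ inBig n m j
  · obtain ⟨hi, hj⟩ := h
    rw [extb_apply_big n m _ hi hj, Matrix.mul_apply,
      sum_emb n m _ (fun k hk => by
        rw [extb_apply_nbig n m Y k j (fun hh => hk hh.1), mul_zero])]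
    apply Finset.sum_congr rfl
    intro k _
    rw [extb_apply_big n m X hi (inBig_emb n m k), extb_apply_big n m Y (inBig_emb n m k) hj,
      ue_emb]
  · rw [extb_apply_nbig n m _ i j h]
    apply Finset.sum_eq_zero
    intro k _
    by_cases hi : inBig n m i
    · rw [extb_apply_nbig n m Y k j (fun hh => h ⟨hi, hh.2⟩), mul_zero]
    · rw [extb_apply_nbig n m X i k (fun hh => hi hh.1), zero_mul]

lemma beta_mul_even_left (n m : ℕ) (E M : GMat n m) (hE : IsHomog n m false E) :
    beta n m (E * M) = beta n m E * beta n m M := by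
  ext i j
  show (E * M) (emb n m i) (emb n m j) = _
  rw [Matrix.mul_apply, Matrix.mul_apply,
    sum_emb n m _ (fun k hk => by
      rw [hE (emb n m i) k ((bool_xor_ne_false _ _).2 (bdeg_emb_ne n m i k hk)), zero_mul])]
  rfl

lemma beta_mul_even_right (n m : ℕ) (E M : GMat n m) (hE : IsHomog n m false E) :
    beta n m (M * E) = beta n m M * beta n m E := by
  ext i j
  show (M * E) (emb n m i) (emb n m j) = _
  rw [Matrix.mul_apply, Matrix.mul_apply,
    sum_emb n m _ (fun k hk => by
      rw [hE k (emb n m j) (by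
        rw [bool_xor_ne_false]
        exact fun hh => (bdeg_emb_ne n m j k hk) hh.symm), mul_zero])]
  rfl

end GMat

namespace GMat

lemma bool_fact : ∀ x y z a b : Bool, Bool.xor x z ≠ Bool.xor a b → Bool.xor x y = a →
    Bool.xor y z ≠ b := by decide

lemma homog_mul (n m : ℕ) (a b : Bool) (A B : GMat n m)
    (hA : IsHomog n m a A) (hB : IsHomog n m b B) :
    IsHomog n m (Bool.xor a b) (A * B) := by
  intro i j hij
  rw [Matrix.mul_apply]
  apply Finset.sum_eq_zero
  intro k _
  by_cases h : Bool.xor (bdeg n m i) (bdeg n m k) = a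
  · rw [hB k j (bool_fact _ _ _ _ _ hij h), mul_zero]
  · rw [hA i k h, zero_mul]

lemma homog_sub (n m : ℕ) (a : Bool) (A B : GMat n m)
    (hA : IsHomog n m a A) (hB : IsHomog n m a B) : IsHomog n m a (A - B) := by
  intro i j h
  rw [Matrix.sub_apply, hA i j h, hB i j h, sub_zero]

lemma homog_one (n m : ℕ) : IsHomog n m false 1 := by
  intro i j h
  rw [bool_xor_ne_false] at h
  exact Matrix.one_apply_ne (fun hh => h (by rw [hh]))

/-- even part -/
def evp (n m : ℕ) (M : GMat n m) : GMat n m :=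
  Matrix.of fun i j => if bdeg n m i = bdeg n m j then M i j else 0

/-- odd part -/
def odp (n m : ℕ) (M : GMat n m) : GMat n m :=
  Matrix.of fun i j => if bdeg n m i = bdeg n m j then 0 else M i j

lemma evp_add_odp (n m : ℕ) (M : GMat n m) : evp n m M + odp n m M = M := by
  ext i j
  simp only [evp, odp, Matrix.add_apply, Matrix.of_apply]
  split <;> simp

lemma homog_evp (n m : ℕ) (M : GMat n m) : IsHomog n m false (evp n m M) := by
  intro i j h
  rw [bool_xor_ne_false] at h
  simp only [evp, Matrix.of_apply, if_neg h]

lemma homog_odp (n m : ℕ) (M : GMat n m) : IsHomog n m true (odp n m M) := by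
  intro i j h
  have h' : bdeg n m i = bdeg n m j := by
    revert h
    cases bdeg n m i <;> cases bdeg n m j <;> decide
  simp only [odp, Matrix.of_apply, if_pos h']

lemma beta_evp (n m : ℕ) (M : GMat n m) (h : beta n m M = 0) : beta n m (evp n m M) = 0 := by
  ext i j
  have hb : bdeg n m (emb n m i) = bdeg n m (emb n m j) :=
    bdeg_eq_of_inBig n m (inBig_emb n m i) (inBig_emb n m j)
  show evp n m M (emb n m i) (emb n m j) = 0
  simp only [evp, Matrix.of_apply, if_pos hb]
  have := congrFun (congrFun h i) j
  exact this

lemma beta_homog_odd (n m : ℕ) (M : GMat n m) (h : IsHomog n m true M) : beta n m M = 0 := by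
  ext i j
  have hb : bdeg n m (emb n m i) = bdeg n m (emb n m j) :=
    bdeg_eq_of_inBig n m (inBig_emb n m i) (inBig_emb n m j)
  show M (emb n m i) (emb n m j) = 0
  apply h
  rw [hb]
  cases bdeg n m (emb n m j) <;> decide

lemma sgn_false (a : Bool) : sgn false a = 1 := by simp [sgn]

section Der

variable {n m : ℕ} {D : GMat n m → GMat n m} (hD : IsGDer n m false D)
include hD

lemma gder_zero : D 0 = 0 := by
  have h := hD.1 0 0
  rw [add_zero] at h
  exact right_eq_add.mp h

lemma gder_sub (A B : GMat n m) : D (A - B) = D A - D B := by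
  have : A - B = A + (-1 : ℂ) • B := by
    rw [neg_one_smul]; exact sub_eq_add_neg A B
  rw [this, hD.1, hD.2.1, neg_one_smul, ← sub_eq_add_neg]

lemma gder_one : D 1 = 0 := by
  have h := hD.2.2.2 false 1 1 (homog_one n m)
  rw [show (1 : GMat n m) * 1 = 1 from one_mul 1, mul_one, sgn_false, one_smul, one_mul] at h
  exact right_eq_add.mp h

end Der

/-- the projection onto the big block -/
def Pbig (n m : ℕ) : GMat n m := extb n m 1

lemma Pbig_diag (n m : ℕ) :
    Pbig n m = Matrix.diagonal (fun i => if inBig n m i then 1 else 0) := by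
  unfold Pbig
  ext i j
  rw [Matrix.diagonal_apply]
  by_cases h : inBig n m i ∧ inBig n m j
  · rw [extb_apply_big n m 1 h.1 h.2, Matrix.one_apply]
    by_cases hij : i = j
    · rw [if_pos hij, if_pos (by rw [hij]), if_pos h.1]
    · rw [if_neg hij, if_neg (fun hu : ue n m i = ue n m j => hij (by
        rw [← emb_ue n m i h.1, ← emb_ue n m j h.2, hu]))]
  · rw [extb_apply_nbig n m 1 i j h]
    by_cases hij : i = j
    · subst hij
      rw [if_pos rfl, if_neg (fun hi => h ⟨hi, hi⟩)]
    · rw [if_neg hij]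

end GMat

namespace GMat

lemma bdeg_ne_of_mixed (n m : ℕ) {i j : Fin (n+m)} (hi : inBig n m i) (hj : ¬ inBig n m j) :
    bdeg n m i ≠ bdeg n m j := by
  unfold inBig at *
  rw [not_not] at hj
  rw [hj]; exact hi

lemma homog_Pbig (n m : ℕ) : IsHomog n m false (Pbig n m) := extb_homog n m 1

lemma Pbig_mul_Pbig (n m : ℕ) : Pbig n m * Pbig n m = Pbig n m := by
  unfold Pbig
  rw [extb_mul_extb, one_mul]

section Der2

variable {n m : ℕ} {D : GMat n m → GMat n m} (hD : IsGDer n m false D)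
include hD

lemma gder_Pbig : D (Pbig n m) = 0 := by
  have h := hD.2.2.2 false (Pbig n m) (Pbig n m) (homog_Pbig n m)
  rw [Pbig_mul_Pbig, sgn_false, one_smul] at h
  have hN : IsHomog n m false (D (Pbig n m)) := by
    have := hD.2.2.1 false (Pbig n m) (homog_Pbig n m)
    simpa using this
  set N := D (Pbig n m) with hNdef
  ext i j
  have h' := congrFun (congrFun h i) j
  rw [Matrix.add_apply, Pbig_diag, Matrix.mul_diagonal, Matrix.diagonal_mul] at h'
  show N i j = 0
  by_cases hi : inBig n m i <;> by_cases hj : inBig n m j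
  · rw [if_pos hi, if_pos hj, mul_one, one_mul] at h'
    exact right_eq_add.mp h'
  · exact hN i j ((bool_xor_ne_false _ _).2 (bdeg_ne_of_mixed n m hi hj))
  · exact hN i j ((bool_xor_ne_false _ _).2 fun hh => (bdeg_ne_of_mixed n m hj hi) hh.symm)
  · rw [if_neg hi, if_neg hj, mul_zero, zero_mul, add_zero] at h'
    exact h'

lemma welldef_even (M : GMat n m) (hM : IsHomog n m false M) (hb : beta n m M = 0) :
    beta n m (D M) = 0 := by
  set Q : GMat n m := 1 - Pbig n m with hQdef
  have hQdiag : Q = Matrix.diagonal (fun i => if inBig n m i then 0 else 1) := by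
    rw [hQdef, Pbig_diag, ← Matrix.diagonal_one, Matrix.diagonal_sub]
    apply congrArg Matrix.diagonal
    funext i
    split <;> norm_num
  have hQhom : IsHomog n m false Q := by
    rw [hQdef]
    exact homog_sub n m false 1 (Pbig n m) (homog_one n m) (homog_Pbig n m)
  have hMQQ : M = Q * M * Q := by
    ext i j
    rw [hQdiag, Matrix.mul_diagonal, Matrix.diagonal_mul]
    by_cases hi : inBig n m i <;> by_cases hj : inBig n m j <;> simp only [hi, hj,
      if_true, if_false, mul_zero, zero_mul, mul_one, one_mul]
    · calc M i j = beta n m M (ue n m i) (ue n m j) := by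
            show M i j = M (emb n m (ue n m i)) (emb n m (ue n m j))
            rw [emb_ue n m i hi, emb_ue n m j hj]
        _ = 0 := by rw [hb]; rfl
    · exact hM i j ((bool_xor_ne_false _ _).2 (bdeg_ne_of_mixed n m hi hj))
    · exact hM i j ((bool_xor_ne_false _ _).2 fun hh => (bdeg_ne_of_mixed n m hj hi) hh.symm)
  have hDQ : D Q = 0 := by
    rw [hQdef, gder_sub hD, gder_one hD, gder_Pbig hD, sub_zero]
  have hQMhom : IsHomog n m false (Q * M) := by
    have := homog_mul n m false false Q M hQhom hM
    simpa using this
  have hDM : D M = Q * (D M * Q) := by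
    conv_lhs => rw [hMQQ]
    rw [hD.2.2.2 false (Q * M) Q hQMhom, hDQ, mul_zero, sgn_false, one_smul, add_zero,
      hD.2.2.2 false Q M hQhom, hDQ, zero_mul, sgn_false, one_smul, zero_add, mul_assoc]
  ext i j
  show (D M) (emb n m i) (emb n m j) = 0
  rw [hDM, hQdiag, Matrix.diagonal_mul, if_pos (inBig_emb n m i), zero_mul]

lemma welldef (M : GMat n m) (hb : beta n m M = 0) : beta n m (D M) = 0 := by
  have hsplit : D M = D (evp n m M) + D (odp n m M) := by
    conv_lhs => rw [← evp_add_odp n m M]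
    exact hD.1 _ _
  have hodd : beta n m (D (odp n m M)) = 0 := by
    apply beta_homog_odd
    have := hD.2.2.1 true (odp n m M) (homog_odp n m M)
    simpa using this
  have heven : beta n m (D (evp n m M)) = 0 :=
    welldef_even hD (evp n m M) (homog_evp n m M) (beta_evp n m M hb)
  rw [hsplit, beta_add, heven, hodd, add_zero]

lemma compat (M : GMat n m) :
    beta n m (D (extb n m (beta n m M))) = beta n m (D M) := by
  have h0 : beta n m (M - extb n m (beta n m M)) = 0 := by
    rw [beta_sub, beta_extb, sub_self]
  have := welldef hD _ h0
  rw [gder_sub hD, beta_sub, sub_eq_zero] at this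
  exact this.symm

end Der2

end GMat

namespace GMat

open Matrix

lemma sum_stdBasis_diag (k : ℕ) : ∑ l : Fin k, Matrix.single l l (1 : ℂ) = 1 := by
  ext a b
  rw [Matrix.sum_apply, Matrix.one_apply]
  by_cases h : a = b
  · subst h
    rw [if_pos rfl, Finset.sum_eq_single a (fun l _ hl =>
        Matrix.single_apply_of_ne _ _ _ _ _ (fun hh => hl hh.1))
      (fun h => absurd (Finset.mem_univ a) h)]
    rw [Matrix.single_apply_same]
  · rw [if_neg h]
    apply Finset.sum_eq_zero
    intro l _
    apply Matrix.single_apply_of_ne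
    intro ⟨h1, h2⟩
    exact h (h1.symm.trans h2)

lemma derivation_inner {k : ℕ} (hk : 0 < k)
    (f : Matrix (Fin k) (Fin k) ℂ → Matrix (Fin k) (Fin k) ℂ)
    (hadd : ∀ X Y, f (X + Y) = f X + f Y)
    (hsmul : ∀ (c : ℂ) X, f (c • X) = c • f X)
    (hmul : ∀ X Y, f (X * Y) = f X * Y + X * f Y) :
    ∃ B, ∀ X, f X = B * X - X * B := by
  set z : Fin k := ⟨0, hk⟩ with hz
  set E : Fin k → Fin k → Matrix (Fin k) (Fin k) ℂ := fun i j => Matrix.single i j 1 with hE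
  have hmulE : ∀ (i j l : Fin k), E i j * E j l = E i l := by
    intro i j l
    rw [hE]
    simp only [Matrix.single_mul_single_same, mul_one]
  have hmulE0 : ∀ (i j l r : Fin k), j ≠ l → E i j * E l r = 0 := by
    intro i j l r h
    rw [hE]
    simp only [Matrix.single_mul_single_of_ne _ _ _ _ h]
  have hf0 : f 0 = 0 := by
    have h := hsmul 0 0
    rw [zero_smul, zero_smul] at h
    exact h
  set B : Matrix (Fin k) (Fin k) ℂ := ∑ l, f (E l z) * E z l with hB
  refine ⟨B, ?_⟩
  -- the sandwich identity
  have h3 : E z z * f (E z z) * E z z = 0 := by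
    have h := hmul (E z z) (E z z)
    rw [hmulE z z z] at h
    have key : E z z * f (E z z) * E z z = E z z * f (E z z) * E z z
        + E z z * f (E z z) * E z z := by
      conv_lhs => rw [h]
      have expand : E z z * (f (E z z) * E z z + E z z * f (E z z)) * E z z =
          E z z * f (E z z) * (E z z * E z z) + (E z z * E z z) * f (E z z) * E z z := by
        noncomm_ring
      rw [expand, hmulE z z z]
    exact right_eq_add.mp key
  have hsand : ∀ i j, E i z * f (E z z) * E z j = 0 := by
    intro i j
    have h1 : E i z * E z z = E i z := hmulE i z z
    have h2 : E z z * E z j = E z j := hmulE z z j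
    conv_lhs => rw [← h1]
    conv_lhs => rw [← h2]
    have expand : E i z * E z z * f (E z z) * (E z z * E z j) =
        E i z * (E z z * f (E z z) * E z z) * E z j := by noncomm_ring
    rw [expand, h3, mul_zero, zero_mul]
  have hBE : ∀ i j, B * E i j = f (E i z) * E z j := by
    intro i j
    rw [hB, Finset.sum_mul]
    rw [Finset.sum_eq_single i (fun l _ hl => by
        rw [mul_assoc, hmulE0 z l i j hl, mul_zero])
      (fun h => absurd (Finset.mem_univ i) h)]
    rw [mul_assoc, hmulE z i j]
  have hEB : ∀ i j, E i j * B = - (E i z * f (E z j)) := by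
    intro i j
    rw [hB, Finset.mul_sum]
    have hterm : ∀ l, E i j * (f (E l z) * E z l) =
        E i z * f (E z j * E l z) * E z l - E i z * f (E z j) * (E l z * E z l) := by
      intro l
      have hiz : E i z * E z j = E i j := hmulE i z j
      have hswap : E z j * f (E l z) = f (E z j * E l z) - f (E z j) * E l z := by
        rw [hmul (E z j) (E l z)]
        exact (add_sub_cancel_left _ _).symm
      calc E i j * (f (E l z) * E z l) = E i z * (E z j * f (E l z)) * E z l := by
            rw [← hiz]; noncomm_ring
        _ = E i z * (f (E z j * E l z) - f (E z j) * E l z) * E z l := by rw [hswap]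
        _ = E i z * f (E z j * E l z) * E z l - E i z * f (E z j) * (E l z * E z l) := by
            noncomm_ring
    rw [Finset.sum_congr rfl (fun l _ => hterm l), Finset.sum_sub_distrib]
    have hs1 : ∑ l, E i z * f (E z j * E l z) * E z l = 0 := by
      rw [Finset.sum_eq_single j (fun l _ hl => by
          rw [hmulE0 z j l z (fun hh => hl hh.symm), hf0, mul_zero, zero_mul])
        (fun h => absurd (Finset.mem_univ j) h)]
      rw [hmulE z j z]
      exact hsand i j
    have hs2 : ∑ l, E i z * f (E z j) * (E l z * E z l) = E i z * f (E z j) := by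
      rw [← Finset.mul_sum]
      have : ∑ l, E l z * E z l = 1 := by
        rw [Finset.sum_congr rfl (fun l _ => hmulE l z l)]
        exact sum_stdBasis_diag k
      rw [this, mul_one]
    rw [hs1, hs2, zero_sub]
  have hstd : ∀ (i j : Fin k) (c : ℂ),
      f (Matrix.single i j c) = B * Matrix.single i j c - Matrix.single i j c * B := by
    intro i j c
    have hc : Matrix.single i j c = c • E i j := by
      rw [hE, Matrix.smul_single, smul_eq_mul, mul_one]
    rw [hc, hsmul, mul_smul_comm, smul_mul_assoc, ← smul_sub]
    apply congrArg
    rw [hBE, hEB, sub_neg_eq_add, ← hmul (E i z) (E z j), hmulE i z j]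
  intro X
  induction X using Matrix.induction_on' with
  | h_zero => rw [hf0, mul_zero, zero_mul, sub_zero]
  | h_add p q hp hq => rw [hadd, hp, hq, mul_add, add_mul]; noncomm_ring
  | h_std_basis i j x => exact hstd i j x

end GMat

/-- The induced map `β̂` on even graded derivations, `β̂(D)(β M) = β(D M)`, is a
well-defined surjective Lie algebra homomorphism with `β̂(ad E) = ad (β E)` for
all even supertrace-free `E`. -/
theorem betahat_properties (n m : ℕ) (hnm : n ≠ m) :
    (∀ D : GMat n m → GMat n m, GMat.IsGDer n m false D →
      ∃! Db : BMat n m → BMat n m,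
        (∀ M : GMat n m, Db (GMat.beta n m M) = GMat.beta n m (D M)) ∧
        (∀ X Y : BMat n m, Db (X + Y) = Db X + Db Y) ∧
        (∀ (c : ℂ) (X : BMat n m), Db (c • X) = c • Db X) ∧
        (∀ X Y : BMat n m, Db (X * Y) = Db X * Y + X * Db Y)) ∧
    (∀ Db : BMat n m → BMat n m,
      ((∀ X Y : BMat n m, Db (X + Y) = Db X + Db Y) ∧
       (∀ (c : ℂ) (X : BMat n m), Db (c • X) = c • Db X) ∧
       (∀ X Y : BMat n m, Db (X * Y) = Db X * Y + X * Db Y)) →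
      ∃ D : GMat n m → GMat n m, GMat.IsGDer n m false D ∧
        ∀ M : GMat n m, Db (GMat.beta n m M) = GMat.beta n m (D M)) ∧
    (∀ D D' : GMat n m → GMat n m, GMat.IsGDer n m false D →
      GMat.IsGDer n m false D' →
      ∀ Db Db' : BMat n m → BMat n m,
        (∀ M : GMat n m, Db (GMat.beta n m M) = GMat.beta n m (D M)) →
        (∀ M : GMat n m, Db' (GMat.beta n m M) = GMat.beta n m (D' M)) →
        ∀ M : GMat n m, GMat.beta n m (D (D' M) - D' (D M)) =
          Db (Db' (GMat.beta n m M)) - Db' (Db (GMat.beta n m M))) ∧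
    (∀ E : GMat n m, GMat.IsHomog n m false E → GMat.str n m E = 0 →
      ∀ M : GMat n m, GMat.beta n m (E * M - M * E) =
        GMat.beta n m E * GMat.beta n m M - GMat.beta n m M * GMat.beta n m E) := by
  refine ⟨?_, ?_, ?_, ?_⟩
  · -- well-definedness and uniqueness
    intro D hD
    refine ⟨fun X => GMat.beta n m (D (GMat.extb n m X)), ⟨?_, ?_, ?_, ?_⟩, ?_⟩
    · intro M
      exact GMat.compat hD M
    · intro X Y
      show GMat.beta n m (D (GMat.extb n m (X + Y))) = _
      rw [GMat.extb_add, hD.1, GMat.beta_add]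
    · intro c X
      show GMat.beta n m (D (GMat.extb n m (c • X))) = _
      rw [GMat.extb_smul, hD.2.1, GMat.beta_smul]
    · intro X Y
      show GMat.beta n m (D (GMat.extb n m (X * Y))) = _
      rw [← GMat.extb_mul_extb,
        hD.2.2.2 false (GMat.extb n m X) (GMat.extb n m Y) (GMat.extb_homog n m X),
        GMat.sgn_false, one_smul, GMat.beta_add,
        GMat.beta_mul_extb n m (D (GMat.extb n m X)) Y,
        GMat.beta_extb_mul n m X (D (GMat.extb n m Y))]
    · rintro Db' ⟨hc, -, -, -⟩
      funext X
      have h := hc (GMat.extb n m X)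
      rw [GMat.beta_extb] at h
      exact h
  · -- surjectivity
    rintro Db ⟨hadd, hsmul, hmul⟩
    have hk : 0 < max n m := by omega
    obtain ⟨B, hB⟩ := GMat.derivation_inner hk Db hadd hsmul hmul
    refine ⟨fun M => GMat.extb n m B * M - M * GMat.extb n m B, ⟨?_, ?_, ?_, ?_⟩, ?_⟩
    · intro A A'
      noncomm_ring
    · intro c A
      simp only [mul_smul_comm, smul_mul_assoc, smul_sub]
    · intro a M hM
      have h1 := GMat.homog_mul n m false a (GMat.extb n m B) M (GMat.extb_homog n m B) hM
      have h2 := GMat.homog_mul n m a false M (GMat.extb n m B) hM (GMat.extb_homog n m B)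
      simp only [Bool.false_xor, Bool.xor_false] at h1 h2 ⊢
      exact GMat.homog_sub n m a _ _ h1 h2
    · intro a M M' hM
      rw [GMat.sgn_false, one_smul]
      noncomm_ring
    · intro M
      show Db (GMat.beta n m M) = _
      rw [hB (GMat.beta n m M), GMat.beta_sub,
        GMat.beta_extb_mul n m B M, GMat.beta_mul_extb n m M B]
  · -- Lie algebra homomorphism
    intro D D' _ _ Db Db' hc hc' M
    rw [GMat.beta_sub, ← hc (D' M), ← hc' (D M), ← hc' M, ← hc M]
  · -- compatibility with adjoint actions
    intro E hE _ M
    rw [GMat.beta_sub, GMat.beta_mul_even_left n m E M hE, GMat.beta_mul_even_right n m E M hE]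

end
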